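/- Let g : X → ℝ with 0 < |g| ≤ 1 everywhere, and for k = 1,…,n let g_k : X → ℝ satisfy |g_k(ω)| ≤ c₄ |g(ω)|^{t_k} with t_k ∈ (0,1]. For integers 0 ≤ l ≤ k ≤ n define G^p_{l,k}(ω) = (|g(ω)|^p / g(ω)^l) Σ l!/(j₁!⋯j_k!) g₁(ω)^{j₁}⋯g_k(ω)^{j_k}, summed over j₁,…,j_k ≥ 0 with j₁+⋯+j_k = l and j₁+2j₂+⋯+kj_k = k (and G^p_{0,0} = |g|^p). If p_k := p̲ + (n/k)(1 − t_k) ≤ p(n) for each k (where p̲ ≥ 0 and p(n) ≥ p̲ are given constants), then |G^p_{l,k}(ω)| ≤ C(k,l) |g(ω)|^{p − (k/n)p(n) + (k/n)p̲} for all ω, with C(k,l) = binom(k−1, l−1) c₄^l. -/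

import Mathlib

open PowerSeries Finset in
lemma comb_aux (k l : ℕ) (hl : 1 ≤ l) (hlk : l ≤ k) :
    ∑ j ∈ (Fintype.piFinset fun _ : Fin k => Finset.range (k + 1)).filter
        (fun j : Fin k → ℕ => (∑ i : Fin k, j i) = l ∧ (∑ i : Fin k, (i.1 + 1) * j i) = k),
      Nat.multinomial Finset.univ j = Nat.choose (k - 1) (l - 1) := by
  classical
  have hk : 1 ≤ k := hl.trans hlk
  have hlt : ¬ (k ≤ k - l) := by omega
  have heq : l - 1 + (k - l) = k - 1 := by omega
  have hset : (Fintype.piFinset fun _ : Fin k => Finset.range (k + 1)).filter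
        (fun j : Fin k → ℕ => (∑ i : Fin k, j i) = l ∧ (∑ i : Fin k, (i.1 + 1) * j i) = k)
      = (Finset.piAntidiag (Finset.univ : Finset (Fin k)) l).filter
        (fun j : Fin k → ℕ => (∑ i : Fin k, (i.1 + 1) * j i) = k) := by
    ext j
    simp only [Finset.mem_filter, Fintype.mem_piFinset, Finset.mem_range,
      Finset.mem_piAntidiag, Finset.mem_univ, imp_true_iff, and_true]
    constructor
    · rintro ⟨-, h1, h2⟩; exact ⟨h1, h2⟩
    · rintro ⟨h1, h2⟩
      refine ⟨fun i => ?_, h1, h2⟩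
      have : j i ≤ l := h1 ▸ Finset.single_le_sum (f := j) (fun _ _ => Nat.zero_le _)
        (Finset.mem_univ i)
      omega
  rw [hset]
  set Q : ℤ⟦X⟧ := ∑ i : Fin k, X ^ i.1 with hQ
  set P : ℤ⟦X⟧ := ∑ i : Fin k, X ^ (i.1 + 1) with hP
  have hPQ : P = Q * X := by
    rw [hP, hQ, Finset.sum_mul]
    exact Finset.sum_congr rfl fun i _ => (pow_succ X i.1)
  -- coefficient of X^k in P^l equals our sum
  have hcoeff1 : (coeff k) (P ^ l) =
      ∑ j ∈ (Finset.piAntidiag (Finset.univ : Finset (Fin k)) l).filter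
        (fun j : Fin k → ℕ => (∑ i : Fin k, (i.1 + 1) * j i) = k),
      (Nat.multinomial Finset.univ j : ℤ) := by
    rw [hP, Finset.sum_pow_eq_sum_piAntidiag, map_sum, Finset.sum_filter]
    refine Finset.sum_congr rfl fun j hj => ?_
    have hprod : (∏ i : Fin k, ((X : ℤ⟦X⟧) ^ (i.1 + 1)) ^ j i) =
        (X : ℤ⟦X⟧) ^ (∑ i : Fin k, (i.1 + 1) * j i) := by
      simp_rw [← pow_mul]
      exact Finset.prod_pow_eq_pow_sum _ _ _
    rw [hprod]
    have hcast : ((Nat.multinomial Finset.univ j : ℕ) : ℤ⟦X⟧)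
        = C ((Nat.multinomial Finset.univ j : ℤ)) := by
      rw [← map_natCast C]
    rw [hcast, coeff_C_mul, coeff_X_pow]
    by_cases h : (∑ i : Fin k, (i.1 + 1) * j i) = k
    · rw [if_pos h, if_pos h.symm, mul_one]
    · rw [if_neg h, if_neg (fun hh => h hh.symm), mul_zero]
  -- coefficient of X^k in P^l via geometric series
  have hgeom : Q * (1 - X) = 1 - X ^ k := by
    have := geom_sum_mul (X : ℤ⟦X⟧) k
    have hQ' : Q = ∑ i ∈ Finset.range k, (X : ℤ⟦X⟧) ^ i := by
      rw [hQ, Finset.sum_range fun i => (X : ℤ⟦X⟧) ^ i]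
    rw [hQ']
    linear_combination -this
  have hV := invOneSubPow_val_eq_mk_sub_one_add_choose_of_pos (S := ℤ) (d := l) hl
  set V : ℤ⟦X⟧ := (invOneSubPow ℤ l).val with hVdef
  have hQl : Q ^ l = (1 - X ^ k) ^ l * V := by
    have h1 : Q ^ l * (1 - X) ^ l = (1 - X ^ k) ^ l := by
      rw [← mul_pow, hgeom]
    have h2 : (1 - X : ℤ⟦X⟧) ^ l * V = 1 := by
      have := (invOneSubPow ℤ l).inv_val
      rw [invOneSubPow_inv_eq_one_sub_pow] at this
      exact this
    calc Q ^ l = Q ^ l * ((1 - X) ^ l * V) := by rw [h2, mul_one]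
    _ = (Q ^ l * (1 - X) ^ l) * V := by ring
    _ = (1 - X ^ k) ^ l * V := by rw [h1]
  -- (1 - X^k)^l = 1 - X^k * W
  obtain ⟨W, hW⟩ : (X : ℤ⟦X⟧) ^ k ∣ 1 - (1 - X ^ k) ^ l := by
    have h := sub_dvd_pow_sub_pow (1 : ℤ⟦X⟧) (1 - X ^ k) l
    simpa using h
  have hcoeff2 : (coeff (k - l)) (Q ^ l) = Nat.choose (k - 1) (l - 1) := by
    have hexp : (1 - X ^ k) ^ l * V = V - X ^ k * (W * V) := by
      have : (1 - X ^ k) ^ l = 1 - X ^ k * W := by linear_combination -hW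
      rw [this]; ring
    rw [hQl, hexp, map_sub]
    have hzero : (coeff (k - l)) (X ^ k * (W * V)) = 0 := by
      rw [mul_comm, PowerSeries.coeff_mul_X_pow' (W * V) k (k - l), if_neg hlt]
    rw [hzero, sub_zero, hV, coeff_mk]
    rw [heq]
  have hPl : (coeff k) (P ^ l) = (coeff (k - l)) (Q ^ l) := by
    rw [hPQ, mul_pow, PowerSeries.coeff_mul_X_pow' (Q ^ l) l k, if_pos hlk]
  have : ((∑ j ∈ (Finset.piAntidiag (Finset.univ : Finset (Fin k)) l).filter
        (fun j : Fin k → ℕ => (∑ i : Fin k, (i.1 + 1) * j i) = k),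
      Nat.multinomial Finset.univ j : ℕ) : ℤ) = (Nat.choose (k - 1) (l - 1) : ℤ) := by
    push_cast
    rw [← hcoeff1, hPl, hcoeff2]
  exact_mod_cast this

/-- pointwise bound on the functions `G^p_{l,k}` (Lemma 3.3). -/
theorem G_lk_bound
    {X : Type*} (g : X → ℝ) (gk : ℕ → X → ℝ) (n : ℕ) (hn : 1 ≤ n)
    (hg : ∀ ω, 0 < |g ω| ∧ |g ω| ≤ 1)
    (c₄ : ℝ) (hc₄ : 0 < c₄) (t : ℕ → ℝ)
    (ht : ∀ k, 1 ≤ k → k ≤ n → t k ∈ Set.Ioc (0 : ℝ) 1)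
    (hgk : ∀ k, 1 ≤ k → k ≤ n → ∀ ω, |gk k ω| ≤ c₄ * |g ω| ^ t k)
    (pl pn : ℝ) (hpl : 0 ≤ pl) (hplpn : pl ≤ pn)
    (hpk : ∀ k, 1 ≤ k → k ≤ n → pl + ((n : ℝ) / k) * (1 - t k) ≤ pn)
    (p : ℝ) (hp : 0 < p) :
    ∀ l k : ℕ, l ≤ k → k ≤ n → ∀ ω,
      |(if k = 0 then |g ω| ^ p else
          (|g ω| ^ p / g ω ^ l) *
            ∑ j ∈ (Fintype.piFinset fun _ : Fin k => Finset.range (k + 1)).filter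
                (fun j : Fin k → ℕ => (∑ i : Fin k, j i) = l ∧ (∑ i : Fin k, (i.1 + 1) * j i) = k),
              ((Nat.factorial l : ℝ) / ∏ i : Fin k, (Nat.factorial (j i) : ℝ)) *
                ∏ i : Fin k, (gk (i.1 + 1) ω) ^ j i)| ≤
        (Nat.choose (k - 1) (l - 1) : ℝ) * c₄ ^ l *
          |g ω| ^ (p - ((k : ℝ) / n) * pn + ((k : ℝ) / n) * pl) := by
  intro l k hlk hkn ω
  obtain ⟨ha0, ha1⟩ := hg ω
  by_cases hk : k = 0
  · subst hk
    have hl0 : l = 0 := Nat.le_zero.mp hlk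
    subst hl0
    rw [if_pos rfl]
    simp only [Nat.cast_zero, zero_div, zero_mul, sub_zero, add_zero, Nat.choose_self,
      Nat.cast_one, pow_zero, mul_one, one_mul]
    rw [abs_of_nonneg (Real.rpow_nonneg (abs_nonneg _) _)]
  · rw [if_neg hk]
    have hk1 : 1 ≤ k := Nat.one_le_iff_ne_zero.mpr hk
    have hn0 : (0:ℝ) < (n:ℝ) := by exact_mod_cast Nat.lt_of_lt_of_le Nat.zero_lt_one hn
    by_cases hl0 : l = 0
    · subst hl0
      have hempty : (Fintype.piFinset fun _ : Fin k => Finset.range (k + 1)).filter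
          (fun j : Fin k → ℕ => (∑ i : Fin k, j i) = 0 ∧ (∑ i : Fin k, (i.1 + 1) * j i) = k)
          = ∅ := by
        ext j
        simp only [Finset.mem_filter, Finset.notMem_empty, iff_false, not_and]
        rintro - h1 h2
        have hz : ∀ i : Fin k, j i = 0 := fun i =>
          (Finset.sum_eq_zero_iff.mp h1) i (Finset.mem_univ i)
        rw [Finset.sum_eq_zero (fun i _ => by rw [hz i, mul_zero])] at h2
        exact hk h2.symm
      rw [hempty, Finset.sum_empty, mul_zero, abs_zero]
      have : (0:ℝ) ≤ |g ω| ^ (p - ((k : ℝ) / n) * pn + ((k : ℝ) / n) * pl) :=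
        Real.rpow_nonneg (abs_nonneg _) _
      positivity
    · have hl1 : 1 ≤ l := Nat.one_le_iff_ne_zero.mpr hl0
      set a : ℝ := |g ω| with haDef
      set E : ℝ := p - ((k : ℝ) / n) * pn + ((k : ℝ) / n) * pl with hEdef
      set S := (Fintype.piFinset fun _ : Fin k => Finset.range (k + 1)).filter
          (fun j : Fin k → ℕ => (∑ i : Fin k, j i) = l ∧ (∑ i : Fin k, (i.1 + 1) * j i) = k)
        with hSdef
      have hdivnn : 0 ≤ a ^ p / a ^ l :=
        div_nonneg (Real.rpow_nonneg (abs_nonneg _) _) (pow_nonneg (abs_nonneg _) _)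
      -- per-term bound
      have hterm : ∀ j ∈ S,
          (a ^ p / a ^ l) * |((Nat.factorial l : ℝ) / ∏ i : Fin k, (Nat.factorial (j i) : ℝ)) *
              ∏ i : Fin k, (gk (i.1 + 1) ω) ^ j i| ≤
            (Nat.multinomial Finset.univ j : ℝ) * (c₄ ^ l * a ^ E) := by
        intro j hj
        rw [hSdef, Finset.mem_filter] at hj
        obtain ⟨-, hj1, hj2⟩ := hj
        set T : ℝ := ∑ i : Fin k, t (i.1 + 1) * (j i : ℝ) with hTdef
        -- coefficient equals multinomial
        have hcoef_eq : ((Nat.factorial l : ℝ) / ∏ i : Fin k, (Nat.factorial (j i) : ℝ))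
            = (Nat.multinomial Finset.univ j : ℝ) := by
          have hs := Nat.multinomial_spec (Finset.univ : Finset (Fin k)) j
          rw [hj1] at hs
          have hne : (∏ i : Fin k, (Nat.factorial (j i) : ℝ)) ≠ 0 := by positivity
          rw [div_eq_iff hne, mul_comm]
          have := congrArg (Nat.cast (R := ℝ)) hs
          push_cast at this
          exact this.symm
        -- product bound
        have hprod_bound : |∏ i : Fin k, (gk (i.1 + 1) ω) ^ j i| ≤ c₄ ^ l * a ^ T := by
          calc |∏ i : Fin k, (gk (i.1 + 1) ω) ^ j i|
              = ∏ i : Fin k, |gk (i.1 + 1) ω| ^ j i := by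
                rw [Finset.abs_prod]
                exact Finset.prod_congr rfl fun i _ => abs_pow _ _
            _ ≤ ∏ i : Fin k, (c₄ * a ^ t (i.1 + 1)) ^ j i := by
                refine Finset.prod_le_prod (fun i _ => pow_nonneg (abs_nonneg _) _)
                  (fun i _ => pow_le_pow_left₀ (abs_nonneg _) ?_ _)
                exact hgk (i.1 + 1) (by omega) (le_trans (Nat.succ_le_of_lt i.2) hkn) ω
            _ = (∏ i : Fin k, c₄ ^ j i) * ∏ i : Fin k, (a ^ t (i.1 + 1)) ^ j i := by
                rw [← Finset.prod_mul_distrib]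
                exact Finset.prod_congr rfl fun i _ => mul_pow _ _ _
            _ = c₄ ^ l * ∏ i : Fin k, (a ^ t (i.1 + 1)) ^ j i := by
                rw [Finset.prod_pow_eq_pow_sum, hj1]
            _ = c₄ ^ l * a ^ T := by
                congr 1
                rw [hTdef, Real.rpow_sum_of_pos ha0]
                refine Finset.prod_congr rfl fun i _ => ?_
                rw [← Real.rpow_natCast (a ^ t (i.1 + 1)) (j i), ← Real.rpow_mul ha0.le]
        -- exponent inequality
        have hEle : E ≤ p - l + T := by
          have c1 : (∑ i : Fin k, (j i : ℝ)) = l := by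
            have := congrArg (Nat.cast (R := ℝ)) hj1
            push_cast at this; exact this
          have c2 : (∑ i : Fin k, ((i.1 : ℝ) + 1) * (j i : ℝ)) = k := by
            have := congrArg (Nat.cast (R := ℝ)) hj2
            push_cast at this; exact this
          have hstep : ∀ i : Fin k,
              (1 - ((i.1 : ℝ) + 1) / n * (pn - pl)) * (j i : ℝ) ≤ t (i.1 + 1) * (j i : ℝ) := by
            intro i
            have hm0 : (0:ℝ) < (i.1 : ℝ) + 1 := by positivity
            have h := hpk (i.1 + 1) (by omega) (le_trans (Nat.succ_le_of_lt i.2) hkn)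
            push_cast at h
            have h2 : ((n:ℝ) / ((i.1:ℝ) + 1)) * (1 - t (i.1 + 1)) ≤ pn - pl := by linarith
            have h3 := mul_le_mul_of_nonneg_left h2 (le_of_lt (div_pos hm0 hn0))
            rw [show ((i.1:ℝ) + 1) / n * ((n:ℝ) / ((i.1:ℝ) + 1) * (1 - t (i.1 + 1)))
                = 1 - t (i.1 + 1) from by field_simp] at h3
            have key : 1 - ((i.1:ℝ) + 1) / n * (pn - pl) ≤ t (i.1 + 1) := by linarith
            exact mul_le_mul_of_nonneg_right key (Nat.cast_nonneg _)
          have hTge : (l:ℝ) - ((k:ℝ)/n) * (pn - pl) ≤ T := by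
            have heqsum : ∑ i : Fin k, (1 - ((i.1 : ℝ) + 1) / n * (pn - pl)) * (j i : ℝ)
                = (l:ℝ) - ((k:ℝ)/n) * (pn - pl) := by
              calc ∑ i : Fin k, (1 - ((i.1 : ℝ) + 1) / n * (pn - pl)) * (j i : ℝ)
                  = (∑ i : Fin k, (j i : ℝ))
                    - ((pn - pl)/n) * ∑ i : Fin k, ((i.1 : ℝ) + 1) * (j i : ℝ) := by
                    rw [Finset.mul_sum, ← Finset.sum_sub_distrib]
                    exact Finset.sum_congr rfl fun i _ => by ring
                _ = (l:ℝ) - ((pn - pl)/n) * k := by rw [c1, c2]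
                _ = (l:ℝ) - ((k:ℝ)/n) * (pn - pl) := by ring
            rw [hTdef, ← heqsum]
            exact Finset.sum_le_sum fun i _ => hstep i
          rw [hEdef]
          nlinarith [hTge]
        -- combine
        rw [abs_mul, hcoef_eq, abs_of_nonneg (by positivity : (0:ℝ) ≤ (Nat.multinomial Finset.univ j : ℝ))]
        calc (a ^ p / a ^ l) * ((Nat.multinomial Finset.univ j : ℝ) *
              |∏ i : Fin k, (gk (i.1 + 1) ω) ^ j i|)
            ≤ (a ^ p / a ^ l) * ((Nat.multinomial Finset.univ j : ℝ) * (c₄ ^ l * a ^ T)) := by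
              have hm : (0:ℝ) ≤ (Nat.multinomial Finset.univ j : ℝ) := by positivity
              exact mul_le_mul_of_nonneg_left (mul_le_mul_of_nonneg_left hprod_bound hm) hdivnn
          _ = (Nat.multinomial Finset.univ j : ℝ) * (c₄ ^ l * ((a ^ p / a ^ l) * a ^ T)) := by
              ring
          _ ≤ (Nat.multinomial Finset.univ j : ℝ) * (c₄ ^ l * a ^ E) := by
              have heq : (a ^ p / a ^ l) * a ^ T = a ^ (p - l + T) := by
                rw [← Real.rpow_natCast a l, ← Real.rpow_sub ha0, ← Real.rpow_add ha0]
              rw [heq]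
              have hle : a ^ (p - l + T) ≤ a ^ E :=
                Real.rpow_le_rpow_of_exponent_ge ha0 ha1 hEle
              have hm : (0:ℝ) ≤ (Nat.multinomial Finset.univ j : ℝ) := by positivity
              exact mul_le_mul_of_nonneg_left
                (mul_le_mul_of_nonneg_left hle (pow_nonneg hc₄.le _)) hm
      -- assemble
      calc |(a ^ p / g ω ^ l) * ∑ j ∈ S,
              ((Nat.factorial l : ℝ) / ∏ i : Fin k, (Nat.factorial (j i) : ℝ)) *
                ∏ i : Fin k, (gk (i.1 + 1) ω) ^ j i|
          = (a ^ p / a ^ l) * |∑ j ∈ S,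
              ((Nat.factorial l : ℝ) / ∏ i : Fin k, (Nat.factorial (j i) : ℝ)) *
                ∏ i : Fin k, (gk (i.1 + 1) ω) ^ j i| := by
            rw [abs_mul, abs_div, abs_pow, abs_of_nonneg (Real.rpow_nonneg (abs_nonneg _) _)]
        _ ≤ (a ^ p / a ^ l) * ∑ j ∈ S,
              |((Nat.factorial l : ℝ) / ∏ i : Fin k, (Nat.factorial (j i) : ℝ)) *
                ∏ i : Fin k, (gk (i.1 + 1) ω) ^ j i| :=
            mul_le_mul_of_nonneg_left (Finset.abs_sum_le_sum_abs _ _) hdivnn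
        _ = ∑ j ∈ S, (a ^ p / a ^ l) *
              |((Nat.factorial l : ℝ) / ∏ i : Fin k, (Nat.factorial (j i) : ℝ)) *
                ∏ i : Fin k, (gk (i.1 + 1) ω) ^ j i| := Finset.mul_sum _ _ _
        _ ≤ ∑ j ∈ S, (Nat.multinomial Finset.univ j : ℝ) * (c₄ ^ l * a ^ E) :=
            Finset.sum_le_sum hterm
        _ = (∑ j ∈ S, (Nat.multinomial Finset.univ j : ℝ)) * (c₄ ^ l * a ^ E) :=
            (Finset.sum_mul _ _ _).symm
        _ = (Nat.choose (k - 1) (l - 1) : ℝ) * (c₄ ^ l * a ^ E) := by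
            congr 1
            rw [← Nat.cast_sum]
            exact_mod_cast congrArg (Nat.cast (R := ℝ)) (comb_aux k l hl1 hlk)
        _ = (Nat.choose (k - 1) (l - 1) : ℝ) * c₄ ^ l * a ^ E := by ring
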